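/- Let (Ω, 𝒜, μ) be a probability space and X, β^b, β^w : Ω → ℝ be 𝒜-measurable with 0 ≤ X ≤ 1, 0 ≤ β^b ≤ 1 and 0 ≤ β^w ≤ 1 almost everywhere. Let T = X·β^b + (1 − X)·β^w and let m ≤ 𝒜 be the σ-algebra generated by X. If μ[β^w | m] = w0 + w1·X almost everywhere and μ[β^b | m] = b0 + b1·X almost everywhere for real constants w0, w1, b0, b1, then μ[T | m] = w0 + (b0 − w0 + w1)·X + (b1 − w1)·X² almost everywhere. -/

import Mathlib

open MeasureTheory

theorem stmt_3 {Ω : Type*} [m0 : MeasurableSpace Ω] (μ : Measure Ω)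
    [IsProbabilityMeasure μ]
    (X βb βw : Ω → ℝ) (hX : Measurable X) (hβb : Measurable βb) (hβw : Measurable βw)
    (hX01 : ∀ᵐ ω ∂μ, X ω ∈ Set.Icc (0:ℝ) 1)
    (hβb01 : ∀ᵐ ω ∂μ, βb ω ∈ Set.Icc (0:ℝ) 1)
    (hβw01 : ∀ᵐ ω ∂μ, βw ω ∈ Set.Icc (0:ℝ) 1)
    (T : Ω → ℝ) (hT : T = fun ω => X ω * βb ω + (1 - X ω) * βw ω)
    (m : MeasurableSpace Ω) (hm : m = MeasurableSpace.comap X Real.measurableSpace)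
    (w0 w1 b0 b1 : ℝ)
    (hw : μ[βw|m] =ᵐ[μ] fun ω => w0 + w1 * X ω)
    (hb : μ[βb|m] =ᵐ[μ] fun ω => b0 + b1 * X ω) :
    μ[T|m] =ᵐ[μ] fun ω => w0 + (b0 - w0 + w1) * X ω + (b1 - w1) * X ω ^ 2 := by
  have hXm : Measurable[m] X := by
    intro s hs
    rw [hm]
    exact ⟨s, hs, rfl⟩
  have hle : m ≤ m0 := by
    rw [hm]; exact hX.comap_le
  -- integrability facts
  have bound : ∀ (f : Ω → ℝ), Measurable[m0] f → (∀ᵐ ω ∂μ, f ω ∈ Set.Icc (0:ℝ) 1) →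
      Integrable f μ := by
    intro f hf hf01
    refine (integrable_const (1:ℝ)).mono' hf.aestronglyMeasurable ?_
    filter_upwards [hf01] with ω hω
    rw [Real.norm_eq_abs, abs_le]
    constructor <;> linarith [hω.1, hω.2]
  have hXint := bound X hX hX01
  have hbint := bound βb hβb hβb01
  have hwint := bound βw hβw hβw01
  have h1 : Integrable (X * βb) μ := by
    refine bound _ (hX.mul hβb) ?_
    filter_upwards [hX01, hβb01] with ω h1 h2
    simp only [Pi.mul_apply]
    constructor
    · exact mul_nonneg h1.1 h2.1
    · calc X ω * βb ω ≤ 1 * 1 := mul_le_mul h1.2 h2.2 h2.1 zero_le_one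
        _ = 1 := one_mul 1
  have h2 : Integrable ((fun ω => 1 - X ω) * βw) μ := by
    refine bound _ ((measurable_const.sub hX).mul hβw) ?_
    filter_upwards [hX01, hβw01] with ω h1 h2
    simp only [Pi.mul_apply]
    constructor
    · exact mul_nonneg (by linarith [h1.2]) h2.1
    · calc (1 - X ω) * βw ω ≤ 1 * 1 :=
          mul_le_mul (by linarith [h1.1]) h2.2 h2.1 zero_le_one
        _ = 1 := one_mul 1
  have pull1 : μ[X * βb|m] =ᵐ[μ] X * μ[βb|m] :=
    condExp_mul_of_stronglyMeasurable_left hXm.stronglyMeasurable h1 hbint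
  have pull2 : μ[(fun ω => 1 - X ω) * βw|m] =ᵐ[μ] (fun ω => 1 - X ω) * μ[βw|m] :=
    condExp_mul_of_stronglyMeasurable_left
      ((stronglyMeasurable_const.sub hXm.stronglyMeasurable)) h2 hwint
  have hTeq : T = X * βb + (fun ω => 1 - X ω) * βw := by
    funext ω; simp [hT]
  have hadd : μ[T|m] =ᵐ[μ] μ[X * βb|m] + μ[(fun ω => 1 - X ω) * βw|m] := by
    rw [hTeq]; exact condExp_add h1 h2 m
  calc μ[T|m] =ᵐ[μ] μ[X * βb|m] + μ[(fun ω => 1 - X ω) * βw|m] := hadd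
    _ =ᵐ[μ] X * μ[βb|m] + (fun ω => 1 - X ω) * μ[βw|m] := pull1.add pull2
    _ =ᵐ[μ] fun ω => w0 + (b0 - w0 + w1) * X ω + (b1 - w1) * X ω ^ 2 := by
        filter_upwards [hb, hw] with ω hbω hwω
        simp only [Pi.add_apply, Pi.mul_apply, hbω, hwω]
        ring
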